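/- Let T ⊂ ℂ be the continuum self-similar tree, i.e., the attractor of the iterated function system g₁(z) = z/2 − 1/2, g₂(z) = z̄/2 + 1/2, g₃(z) = i·z̄/2 + i/2. For finite words v, w over the alphabet {1,2,3} with v ≠ w, the points g_v(0) and g_w(0) are distinct; more precisely |g_v(0) − g_w(0)| ≥ c·min{2^{−ℓ(v)}, 2^{−ℓ(w)}} for a universal constant c > 0, where ℓ denotes word length and g_w = g_{w₁}∘···∘g_{wₙ}. -/

import Mathlib

open Complex

/-- The three similarities generating the continuum self-similar tree:
`g₁(z) = z/2 - 1/2`, `g₂(z) = z̄/2 + 1/2`, `g₃(z) = i·z̄/2 + i/2`. -/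
noncomputable def csstMap : Fin 3 → ℂ → ℂ :=
  ![fun z => z / 2 - 1 / 2,
    fun z => (starRingEnd ℂ) z / 2 + 1 / 2,
    fun z => Complex.I * (starRingEnd ℂ) z / 2 + Complex.I / 2]

/-- `g_w = g_{w₁} ∘ ⋯ ∘ g_{wₙ}` for a finite word `w` over the alphabet `{1,2,3}`. -/
noncomputable def csstWord : List (Fin 3) → ℂ → ℂ
  | [] => id
  | i :: w => csstMap i ∘ csstWord w

/-- `T` is the continuum self-similar tree: the (unique) nonempty compact
attractor of the iterated function system `{g₁, g₂, g₃}`. -/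
def IsCSST (T : Set ℂ) : Prop :=
  T.Nonempty ∧ IsCompact T ∧
    T = csstMap 0 '' T ∪ csstMap 1 '' T ∪ csstMap 2 '' T

lemma fin3_mk2 : (⟨2, by norm_num⟩ : Fin 3) = 2 := rfl

lemma csstMap_0 (z : ℂ) : csstMap 0 z = z / 2 - 1 / 2 := rfl
lemma csstMap_1 (z : ℂ) : csstMap 1 z = (starRingEnd ℂ) z / 2 + 1 / 2 := rfl
lemma csstMap_2 (z : ℂ) : csstMap 2 z = Complex.I * (starRingEnd ℂ) z / 2 + Complex.I / 2 := rfl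
lemma map0_re (z : ℂ) : (csstMap 0 z).re = z.re/2 - 1/2 := by rw [csstMap_0]; simp [Complex.div_re]
lemma map0_im (z : ℂ) : (csstMap 0 z).im = z.im/2 := by rw [csstMap_0]; simp [Complex.div_im]
lemma map1_re (z : ℂ) : (csstMap 1 z).re = z.re/2 + 1/2 := by rw [csstMap_1]; simp [Complex.div_re]
lemma map1_im (z : ℂ) : (csstMap 1 z).im = -z.im/2 := by rw [csstMap_1]; simp [Complex.div_im]
lemma map2_re (z : ℂ) : (csstMap 2 z).re = z.im/2 := by
  rw [csstMap_2]; simp [Complex.div_re, Complex.div_im]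
lemma map2_im (z : ℂ) : (csstMap 2 z).im = z.re/2 + 1/2 := by
  rw [csstMap_2]; simp [Complex.div_re, Complex.div_im]

lemma csstWord_cons (i : Fin 3) (u : List (Fin 3)) (z : ℂ) :
    csstWord (i :: u) z = csstMap i (csstWord u z) := rfl

lemma csstWord_nil : csstWord [] 0 = 0 := rfl

/-- Invariant: word points `z = g_u(0)` satisfy `|Re z ± Im z| ≤ 1 - 2^{-|u|}`. -/
lemma csst_inv (u : List (Fin 3)) :
    |(csstWord u 0).re + (csstWord u 0).im| ≤ 1 - (1/2:ℝ)^u.length ∧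
    |(csstWord u 0).re - (csstWord u 0).im| ≤ 1 - (1/2:ℝ)^u.length := by
  induction u with
  | nil => norm_num [csstWord]
  | cons i u ih =>
    obtain ⟨h1, h2⟩ := ih
    rw [abs_le] at h1 h2
    have hs : ((1:ℝ)/2)^(u.length+1) = (1/2)^u.length * (1/2) := pow_succ _ _
    rw [csstWord_cons]
    fin_cases i <;>
      simp only [Fin.mk_zero, Fin.mk_one, fin3_mk2, List.length_cons,
        map0_re, map0_im, map1_re, map1_im, map2_re, map2_im] <;>
      constructor <;> rw [abs_le] <;> constructor <;> linarith

/-- Word points lie in `ℤ[i] / 2^{|u|}`. -/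
lemma csst_lattice (u : List (Fin 3)) :
    ∃ a b : ℤ, (csstWord u 0).re = (a:ℝ) / 2^u.length ∧
      (csstWord u 0).im = (b:ℝ) / 2^u.length := by
  induction u with
  | nil => exact ⟨0, 0, by norm_num [csstWord]⟩
  | cons i u ih =>
    obtain ⟨a, b, ha, hb⟩ := ih
    have h2 : ((2:ℝ))^u.length ≠ 0 := by positivity
    rw [csstWord_cons]
    fin_cases i <;>
      simp only [Fin.mk_zero, Fin.mk_one, fin3_mk2, List.length_cons,
        map0_re, map0_im, map1_re, map1_im, map2_re, map2_im, ha, hb]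
    · exact ⟨a - 2^u.length, b, by push_cast; field_simp; ring,
        by rw [div_div, ← pow_succ]⟩
    · exact ⟨a + 2^u.length, -b, by push_cast; field_simp; ring,
        by push_cast; rw [neg_div, neg_div, div_div, ← pow_succ]⟩
    · exact ⟨b, a + 2^u.length, by rw [div_div, ← pow_succ],
        by push_cast; field_simp; ring⟩

lemma csst_ne_zero (i : Fin 3) (u : List (Fin 3)) : csstWord (i :: u) 0 ≠ 0 := by
  intro h
  obtain ⟨h1, h2⟩ := csst_inv u
  rw [abs_le] at h1 h2
  have hp : (0:ℝ) < (1/2:ℝ)^u.length := by positivity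
  rw [csstWord_cons] at h
  have hre := congrArg Complex.re h
  have him := congrArg Complex.im h
  fin_cases i <;>
    simp only [Fin.mk_zero, Fin.mk_one, fin3_mk2, Complex.zero_re, Complex.zero_im,
      map0_re, map0_im, map1_re, map1_im, map2_re, map2_im] at hre him <;>
    linarith

lemma csst_heads_ne (i j : Fin 3) (hij : i ≠ j) (v w : List (Fin 3)) :
    csstWord (i :: v) 0 ≠ csstWord (j :: w) 0 := by
  intro h
  obtain ⟨hp1, hp2⟩ := csst_inv v
  obtain ⟨hq1, hq2⟩ := csst_inv w
  rw [abs_le] at hp1 hp2 hq1 hq2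
  have hpv : (0:ℝ) < (1/2:ℝ)^v.length := by positivity
  have hpw : (0:ℝ) < (1/2:ℝ)^w.length := by positivity
  rw [csstWord_cons, csstWord_cons] at h
  have hre := congrArg Complex.re h
  have him := congrArg Complex.im h
  fin_cases i <;> fin_cases j <;>
    simp only [Fin.mk_zero, Fin.mk_one, fin3_mk2] at hij hre him ⊢ <;>
    [skip; skip; skip; skip; skip; skip; skip; skip; skip] <;>
    first
    | exact hij rfl
    | (simp only [map0_re, map0_im, map1_re, map1_im, map2_re, map2_im] at hre him; linarith)

lemma csst_map_inj (i : Fin 3) : Function.Injective (csstMap i) := by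
  fin_cases i <;> intro x y h <;>
    simp only [Fin.mk_zero, Fin.mk_one, fin3_mk2, csstMap_0, csstMap_1, csstMap_2] at h
  · linear_combination 2 * h
  · have h2 : (starRingEnd ℂ) x = (starRingEnd ℂ) y := by linear_combination 2 * h
    exact (starRingEnd ℂ).injective h2
  · have h2 : (starRingEnd ℂ) x = (starRingEnd ℂ) y := by
      linear_combination (-2*Complex.I) * h +
        ((starRingEnd ℂ) x - (starRingEnd ℂ) y) * Complex.I_sq
    exact (starRingEnd ℂ).injective h2

lemma csst_inj : ∀ v w : List (Fin 3), v ≠ w → csstWord v 0 ≠ csstWord w 0 := by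
  intro v
  induction v with
  | nil =>
    intro w hw
    match w with
    | [] => exact absurd rfl hw
    | j :: w' => exact fun h => csst_ne_zero j w' h.symm
  | cons i v ih =>
    intro w hw
    match w with
    | [] => exact fun h => csst_ne_zero i v h
    | j :: w' =>
      by_cases hij : i = j
      · subst hij
        have hvw : v ≠ w' := by intro h; exact hw (by rw [h])
        intro h
        rw [csstWord_cons, csstWord_cons] at h
        exact ih w' hvw (csst_map_inj i h)
      · exact csst_heads_ne i j hij v w'

lemma csst_dist_aux (v w : List (Fin 3)) (hlen : v.length ≤ w.length)
    (h : csstWord v 0 ≠ csstWord w 0) :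
    (1/2:ℝ)^w.length ≤ dist (csstWord v 0) (csstWord w 0) := by
  obtain ⟨a, b, ha, hb⟩ := csst_lattice v
  obtain ⟨a', b', ha', hb'⟩ := csst_lattice w
  set m := v.length
  set n := w.length
  have hpow : ((2:ℝ)^(n-m)) * 2^m = 2^n := by rw [← pow_add]; congr 1; omega
  have hre : (csstWord v 0 - csstWord w 0).re = ((a * 2^(n-m) - a' : ℤ) : ℝ) / 2^n := by
    rw [Complex.sub_re, ha, ha']
    push_cast
    field_simp
    rw [← hpow]; ring
  have him : (csstWord v 0 - csstWord w 0).im = ((b * 2^(n-m) - b' : ℤ) : ℝ) / 2^n := by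
    rw [Complex.sub_im, hb, hb']
    push_cast
    field_simp
    rw [← hpow]; ring
  have hd : dist (csstWord v 0) (csstWord w 0) = ‖csstWord v 0 - csstWord w 0‖ :=
    Complex.dist_eq _ _
  have h2n : (0:ℝ) < 2^n := by positivity
  have key : ∃ A : ℤ, A ≠ 0 ∧ (A:ℝ) / 2^n ≤ ‖csstWord v 0 - csstWord w 0‖ ∧
      (-(A:ℝ)) / 2^n ≤ ‖csstWord v 0 - csstWord w 0‖ := by
    by_cases hA : (a * 2^(n-m) - a' : ℤ) = 0
    · have hB : (b * 2^(n-m) - b' : ℤ) ≠ 0 := by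
        intro hB
        apply h
        apply Complex.ext
        · have h0 : (csstWord v 0 - csstWord w 0).re = 0 := by
            rw [hre, hA]; norm_num
          rw [Complex.sub_re] at h0; linarith
        · have h0 : (csstWord v 0 - csstWord w 0).im = 0 := by
            rw [him, hB]; norm_num
          rw [Complex.sub_im] at h0; linarith
      refine ⟨b * 2^(n-m) - b', hB, ?_, ?_⟩
      · calc ((b * 2^(n-m) - b' : ℤ) : ℝ) / 2^n = (csstWord v 0 - csstWord w 0).im := him.symm
          _ ≤ |(csstWord v 0 - csstWord w 0).im| := le_abs_self _
          _ ≤ ‖csstWord v 0 - csstWord w 0‖ := Complex.abs_im_le_norm _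
      · calc (-((b * 2^(n-m) - b' : ℤ) : ℝ)) / 2^n = -(csstWord v 0 - csstWord w 0).im := by
              rw [neg_div, ← him]
          _ ≤ |(csstWord v 0 - csstWord w 0).im| := neg_le_abs _
          _ ≤ ‖csstWord v 0 - csstWord w 0‖ := Complex.abs_im_le_norm _
    · refine ⟨a * 2^(n-m) - a', hA, ?_, ?_⟩
      · calc ((a * 2^(n-m) - a' : ℤ) : ℝ) / 2^n = (csstWord v 0 - csstWord w 0).re := hre.symm
          _ ≤ |(csstWord v 0 - csstWord w 0).re| := le_abs_self _
          _ ≤ ‖csstWord v 0 - csstWord w 0‖ := Complex.abs_re_le_norm _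
      · calc (-((a * 2^(n-m) - a' : ℤ) : ℝ)) / 2^n = -(csstWord v 0 - csstWord w 0).re := by
              rw [neg_div, ← hre]
          _ ≤ |(csstWord v 0 - csstWord w 0).re| := neg_le_abs _
          _ ≤ ‖csstWord v 0 - csstWord w 0‖ := Complex.abs_re_le_norm _
  obtain ⟨A, hA, h1, h2⟩ := key
  rw [hd]
  have : (1:ℝ) ≤ |(A:ℝ)| := by exact_mod_cast Int.one_le_abs hA
  rcases abs_cases (A:ℝ) with ⟨he, _⟩ | ⟨he, _⟩
  · have : (1:ℝ)/2^n ≤ (A:ℝ)/2^n := by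
      rw [div_le_div_iff_of_pos_right h2n]; rw [he] at this; exact this
    calc (1/2:ℝ)^n = 1/2^n := by rw [div_pow, one_pow]
      _ ≤ (A:ℝ)/2^n := this
      _ ≤ _ := h1
  · have : (1:ℝ)/2^n ≤ (-(A:ℝ))/2^n := by
      rw [div_le_div_iff_of_pos_right h2n]; rw [he] at this; exact this
    calc (1/2:ℝ)^n = 1/2^n := by rw [div_pow, one_pow]
      _ ≤ (-(A:ℝ))/2^n := this
      _ ≤ _ := h2

theorem stmt17 :
    ∃ c : ℝ, 0 < c ∧ ∀ v w : List (Fin 3), v ≠ w →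
      csstWord v 0 ≠ csstWord w 0 ∧
      c * min ((1 / 2 : ℝ) ^ v.length) ((1 / 2 : ℝ) ^ w.length) ≤
        dist (csstWord v 0) (csstWord w 0) := by
  refine ⟨1, one_pos, fun v w hvw => ?_⟩
  have hne := csst_inj v w hvw
  refine ⟨hne, ?_⟩
  rw [one_mul]
  rcases le_total v.length w.length with hlen | hlen
  · have hmin : min ((1/2:ℝ)^v.length) ((1/2:ℝ)^w.length) = (1/2:ℝ)^w.length := by
      rw [min_eq_right]
      exact pow_le_pow_of_le_one (by norm_num) (by norm_num) hlen
    rw [hmin]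
    exact csst_dist_aux v w hlen hne
  · have hmin : min ((1/2:ℝ)^v.length) ((1/2:ℝ)^w.length) = (1/2:ℝ)^v.length := by
      rw [min_eq_left]
      exact pow_le_pow_of_le_one (by norm_num) (by norm_num) hlen
    rw [hmin, dist_comm]
    exact csst_dist_aux w v hlen hne.symm
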